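/- Let n ≥ 1 and let F : ℝ^{4n} → ℝ be smooth and everywhere positive, and set u = F² and f = −2 ln F. Then for every x ∈ ℝ^{4n}: u(x)·P_f(x)(∇f(x)) = 4·P_F(x)(∇F(x)) + 8·F(x)^{−2}·|∇F(x)|⁴ − 8·F(x)^{−1}·D²F(x)[∇F(x), ∇F(x)] − 4·F(x)^{−1}·|∇F(x)|²·ΔF(x). -/

import Mathlib

open scoped RealInnerProductSpace

noncomputable section

/-- `ℝ^{4n}` identified with `ℍⁿ`: the `4n` real coordinates are indexed by pairs
`(a, t)` where `a` numbers the quaternionic component and `t ∈ {0,1,2,3}` the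
real coordinates `1, i, j, k` of that quaternion. -/
abbrev Qn (n : ℕ) := EuclideanSpace ℝ (Fin n × Fin 4)

/-- The three almost complex structures `I₁, I₂, I₃` on `ℝ^{4n} = ℍⁿ`, given by
componentwise left multiplication by the quaternion units `i, j, k`. -/
def Iop (n : ℕ) (s : Fin 3) (x : Qn n) : Qn n := WithLp.toLp 2 fun (p : Fin n × Fin 4) =>
  ![ ![ -x (p.1, 1),  x (p.1, 0), -x (p.1, 3),  x (p.1, 2) ],
     ![ -x (p.1, 2),  x (p.1, 3),  x (p.1, 0), -x (p.1, 1) ],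
     ![ -x (p.1, 3), -x (p.1, 2),  x (p.1, 1),  x (p.1, 0) ] ] s p.2

/-- The standard orthonormal basis of `ℝ^{4n}`. -/
def eQ (n : ℕ) (p : Fin n × Fin 4) : Qn n := EuclideanSpace.single p 1

/-- Second Fréchet derivative as a bilinear form. -/
def D2Q (n : ℕ) (g : Qn n → ℝ) (x X Y : Qn n) : ℝ := iteratedFDeriv ℝ 2 g x ![X, Y]

/-- Third Fréchet derivative as a trilinear form. -/
def D3Q (n : ℕ) (g : Qn n → ℝ) (x Z X Y : Qn n) : ℝ := iteratedFDeriv ℝ 3 g x ![Z, X, Y]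

/-- The Laplacian `Δg(x) = Σ_a D²g(x)[e_a, e_a]`. -/
def lapQ (n : ℕ) (g : Qn n → ℝ) (x : Qn n) : ℝ := ∑ p, D2Q n g x (eQ n p) (eQ n p)

/-- The flat quaternionic P-form
`P_g(x)(Z) = Σ_b D³g(x)[Z,e_b,e_b] + Σ_{s=1}^3 Σ_b D³g(x)[I_s Z, e_b, I_s e_b]`. -/
def PQ (n : ℕ) (g : Qn n → ℝ) (x Z : Qn n) : ℝ :=
  (∑ b, D3Q n g x Z (eQ n b) (eQ n b)) +
    ∑ s : Fin 3, ∑ b, D3Q n g x (Iop n s Z) (eQ n b) (Iop n s (eQ n b))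

/-! ### Auxiliary lemmas -/

/-- Signs of the action of `I_s` on the basis quaternion units. -/
def qsgn : Fin 3 → Fin 4 → ℝ := ![![1,-1,1,-1], ![1,-1,-1,1], ![1,1,-1,-1]]

/-- Permutation of the basis quaternion units under `I_s` (up to sign). -/
def qperm : Fin 3 → Fin 4 → Fin 4 := ![![1,0,3,2], ![2,3,0,1], ![3,2,1,0]]

lemma Iop_smul (n : ℕ) (s : Fin 3) (c : ℝ) (v : Qn n) :
    Iop n s (c • v) = c • Iop n s v := by
  ext p
  obtain ⟨a, t⟩ := p
  have h : ∀ q : Fin n × Fin 4, (c • v) q = c * v q := fun q => rfl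
  show _ = c * Iop n s v (a, t)
  fin_cases s <;> fin_cases t <;> simp [Iop, h] <;> ring

lemma Iop_eQ (n : ℕ) (s : Fin 3) (a : Fin n) (t : Fin 4) :
    Iop n s (eQ n (a, t)) = qsgn s t • eQ n (a, qperm s t) := by
  ext p
  obtain ⟨b, r⟩ := p
  show Iop n s (eQ n (a,t)) (b, r) = qsgn s t * eQ n (a, qperm s t) (b, r)
  simp only [Iop, eQ, EuclideanSpace.single_apply, PiLp.toLp_apply]
  fin_cases s <;> fin_cases t <;> fin_cases r <;>
    by_cases hb : b = a <;>
    simp [hb, qsgn, qperm, Prod.ext_iff, Matrix.vecHead, Matrix.vecTail, Function.comp]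

/-- Generic cancellation: if `φ` is symmetric on basis pairs within a block and
homogeneous in the second slot, the twisted trace vanishes. -/
lemma sum_I_cancel {n : ℕ} (s : Fin 3) (φ : Qn n → Qn n → ℝ)
    (hsm : ∀ v (c : ℝ) w, φ v (c • w) = c * φ v w)
    (hsymm : ∀ (a : Fin n) t t', φ (eQ n (a,t)) (eQ n (a,t')) = φ (eQ n (a,t')) (eQ n (a,t))) :
    ∑ b : Fin n × Fin 4, φ (eQ n b) (Iop n s (eQ n b)) = 0 := by
  rw [Fintype.sum_prod_type]
  apply Finset.sum_eq_zero
  intro a _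
  have h : ∀ t, φ (eQ n (a,t)) (Iop n s (eQ n (a,t)))
      = qsgn s t * φ (eQ n (a,t)) (eQ n (a, qperm s t)) := by
    intro t; rw [Iop_eQ, hsm]
  simp only [h]
  fin_cases s <;>
    simp [Fin.sum_univ_four, qsgn, qperm, Matrix.vecHead, Matrix.vecTail] <;>
    rw [hsymm] <;> try rw [hsymm]
  all_goals ring_nf
  all_goals try rw [hsymm]
  all_goals ring_nf

/-- Expansion of a continuous linear functional over the basis. -/
lemma clm_sum {n : ℕ} (L : Qn n →L[ℝ] ℝ) (v : Qn n) :
    L v = ∑ b, v b * L (eQ n b) := by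
  have hv : v = ∑ b, v b • eQ n b := by
    have := (EuclideanSpace.basisFun (Fin n × Fin 4) ℝ).sum_repr v
    simpa [eQ, EuclideanSpace.basisFun_apply] using this.symm
  conv_lhs => rw [hv]
  rw [map_sum]
  simp [smul_eq_mul]

lemma hfd_comp_gen {E M P : Type*} [NormedAddCommGroup E] [NormedSpace ℝ E] [NormedAddCommGroup M]
    [NormedSpace ℝ M] [NormedAddCommGroup P] [NormedSpace ℝ P] (A : M →L[ℝ] P) (X : E)
    {c : E → E →L[ℝ] M} {c' : E →L[ℝ] E →L[ℝ] M} {x : E} (h : HasFDerivAt c c' x) :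
    HasFDerivAt (fun y => A (c y X)) ((A.comp (ContinuousLinearMap.apply ℝ M X)).comp c') x :=
  (A.comp (ContinuousLinearMap.apply ℝ M X)).hasFDerivAt.comp x h

lemma D2Q_eq {n : ℕ} (g : Qn n → ℝ) (x X Y : Qn n) :
    D2Q n g x X Y = fderiv ℝ (fderiv ℝ g) x X Y := by
  rw [D2Q, iteratedFDeriv_two_apply]
  simp

lemma D3Q_eq {n : ℕ} {g : Qn n → ℝ} (hg : ContDiff ℝ (⊤ : ℕ∞) g) (x Z X Y : Qn n) :
    D3Q n g x Z X Y = fderiv ℝ (fderiv ℝ (fderiv ℝ g)) x Z X Y := by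
  rw [D3Q, iteratedFDeriv_succ_apply_left]
  have htail : Fin.tail ![Z, X, Y] = ![X, Y] := by
    funext i; fin_cases i <;> rfl
  have hm0 : (![Z, X, Y] : Fin 3 → Qn n) 0 = Z := rfl
  rw [hm0, htail]
  have hd2 : DifferentiableAt ℝ (iteratedFDeriv ℝ 2 g) x := by
    have : ContDiff ℝ ((⊤ : ℕ∞) : WithTop ℕ∞) (iteratedFDeriv ℝ 2 g) :=
      hg.iteratedFDeriv_right (by norm_cast)
    exact (this.differentiable (by norm_cast)).differentiableAt
  have e1 : fderiv ℝ (iteratedFDeriv ℝ 2 g) x Z ![X, Y]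
      = fderiv ℝ (fun y => iteratedFDeriv ℝ 2 g y ![X, Y]) x Z := by
    have := ((ContinuousMultilinearMap.apply ℝ (fun _ : Fin 2 => Qn n) ℝ
        ![X, Y]).hasFDerivAt.comp x hd2.hasFDerivAt).fderiv
    rw [show (fun y => iteratedFDeriv ℝ 2 g y ![X, Y])
        = (ContinuousMultilinearMap.apply ℝ (fun _ : Fin 2 => Qn n) ℝ ![X, Y]) ∘
          (iteratedFDeriv ℝ 2 g) from rfl, this]
    rfl
  rw [e1]
  have e2 : (fun y => iteratedFDeriv ℝ 2 g y ![X, Y])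
      = fun y => fderiv ℝ (fderiv ℝ g) y X Y := by
    funext y; rw [iteratedFDeriv_two_apply]; simp
  rw [e2]
  have hd2' : DifferentiableAt ℝ (fderiv ℝ (fderiv ℝ g)) x := by
    have h1 : ContDiff ℝ ((⊤ : ℕ∞) : WithTop ℕ∞) (fderiv ℝ g) :=
      hg.fderiv_right (by norm_cast)
    have : ContDiff ℝ ((⊤ : ℕ∞) : WithTop ℕ∞) (fderiv ℝ (fderiv ℝ g)) :=
      h1.fderiv_right (by norm_cast)
    exact (this.differentiable (by norm_cast)).differentiableAt
  have := (hfd_comp_gen (ContinuousLinearMap.apply ℝ ℝ Y) X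
      hd2'.hasFDerivAt).fderiv
  rw [show (fun y => fderiv ℝ (fderiv ℝ g) y X Y)
      = fun y => ContinuousLinearMap.apply ℝ ℝ Y (fderiv ℝ (fderiv ℝ g) y X) from rfl,
    this]
  rfl

section core
variable {n : ℕ} {F : Qn n → ℝ}

lemma fderiv_clm_eval {M : Type*} [NormedAddCommGroup M] [NormedSpace ℝ M]
    {c : Qn n → Qn n →L[ℝ] M} {x : Qn n} (h : DifferentiableAt ℝ c x) (X Y : Qn n) :
    fderiv ℝ (fun y => c y Y) x X = fderiv ℝ c x X Y := by
  have := ((ContinuousLinearMap.apply ℝ M Y).hasFDerivAt.comp x h.hasFDerivAt).fderiv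
  rw [show (fun y => c y Y) = (ContinuousLinearMap.apply ℝ M Y) ∘ c from rfl, this]; rfl

lemma fderiv_clm_eval2 {c : Qn n → Qn n →L[ℝ] (Qn n →L[ℝ] ℝ)} {x : Qn n}
    (h : DifferentiableAt ℝ c x) (Z X Y : Qn n) :
    fderiv ℝ (fun y => c y X Y) x Z = fderiv ℝ c x Z X Y := by
  have := (hfd_comp_gen (ContinuousLinearMap.apply ℝ ℝ Y) X h.hasFDerivAt).fderiv
  rw [show (fun y => c y X Y) = fun y => ContinuousLinearMap.apply ℝ ℝ Y (c y X) from rfl, this]; rfl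

variable (hF : ContDiff ℝ (⊤ : ℕ∞) F) (hFpos : ∀ x, 0 < F x)
include hF

lemma diff_dF : Differentiable ℝ (fderiv ℝ F) := by
  have h1 : ContDiff ℝ ((⊤ : ℕ∞) : WithTop ℕ∞) (fderiv ℝ F) := hF.fderiv_right (by norm_cast)
  exact h1.differentiable (by norm_cast)

lemma diff_d2F : Differentiable ℝ (fderiv ℝ (fderiv ℝ F)) := by
  have h1 : ContDiff ℝ ((⊤ : ℕ∞) : WithTop ℕ∞) (fderiv ℝ F) := hF.fderiv_right (by norm_cast)
  have h2 : ContDiff ℝ ((⊤ : ℕ∞) : WithTop ℕ∞) (fderiv ℝ (fderiv ℝ F)) :=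
    h1.fderiv_right (by norm_cast)
  exact h2.differentiable (by norm_cast)

lemma hasFDerivAt_dF (x Y : Qn n) :
    HasFDerivAt (fun y => fderiv ℝ F y Y)
      ((ContinuousLinearMap.apply ℝ ℝ Y).comp (fderiv ℝ (fderiv ℝ F) x)) x :=
  (ContinuousLinearMap.apply ℝ ℝ Y).hasFDerivAt.comp x (diff_dF hF x).hasFDerivAt

lemma hasFDerivAt_b2 (x X Y : Qn n) :
    HasFDerivAt (fun y => fderiv ℝ (fderiv ℝ F) y X Y)
      (((ContinuousLinearMap.apply ℝ ℝ Y).comp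
        (ContinuousLinearMap.apply ℝ (Qn n →L[ℝ] ℝ) X)).comp
        (fderiv ℝ (fderiv ℝ (fderiv ℝ F)) x)) x := by
  have h := hfd_comp_gen (ContinuousLinearMap.apply ℝ ℝ Y) X
      (diff_d2F hF x).hasFDerivAt
  exact h

include hFpos

lemma fderiv_f_eq (x : Qn n) :
    fderiv ℝ (fun y => -2 * Real.log (F y)) x = (-2 * (F x)⁻¹) • fderiv ℝ F x := by
  have h := (((hF.differentiable (by norm_cast)) x).hasFDerivAt.log
    (ne_of_gt (hFpos x))).const_mul (-2 : ℝ)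
  rw [h.fderiv, smul_smul]

lemma hasFDerivAt_invF (x : Qn n) :
    HasFDerivAt (fun y => (F y)⁻¹) ((-((F x) ^ 2)⁻¹) • fderiv ℝ F x) x :=
  (hasDerivAt_inv (ne_of_gt (hFpos x))).comp_hasFDerivAt x
    ((hF.differentiable (by norm_cast)) x).hasFDerivAt

lemma f2_eq (x X Y : Qn n) :
    fderiv ℝ (fderiv ℝ (fun y => -2 * Real.log (F y))) x X Y =
      2 * (((F x)⁻¹ * (F x)⁻¹) * (fderiv ℝ F x X * fderiv ℝ F x Y))
        - 2 * ((F x)⁻¹ * fderiv ℝ (fderiv ℝ F) x X Y) := by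
  have hfC : ContDiff ℝ (⊤ : ℕ∞) (fun y => -2 * Real.log (F y)) :=
    contDiff_const.mul (hF.log fun y => ne_of_gt (hFpos y))
  have hdiff : DifferentiableAt ℝ (fderiv ℝ (fun y => -2 * Real.log (F y))) x := by
    have h1 : ContDiff ℝ ((⊤ : ℕ∞) : WithTop ℕ∞) (fderiv ℝ (fun y => -2 * Real.log (F y))) :=
      hfC.fderiv_right (by norm_cast)
    exact (h1.differentiable (by norm_cast)).differentiableAt
  rw [← fderiv_clm_eval hdiff X Y]
  have e : (fun y => fderiv ℝ (fun z => -2 * Real.log (F z)) y Y)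
      = fun y => -2 * ((F y)⁻¹ * fderiv ℝ F y Y) := by
    funext y
    rw [fderiv_f_eq hF hFpos y]
    simp [mul_assoc]
  rw [e]
  have hD := ((hasFDerivAt_invF hF hFpos x).mul (hasFDerivAt_dF hF x Y)).const_mul (-2 : ℝ)
  erw [hD.fderiv]
  have hne : F x ≠ 0 := ne_of_gt (hFpos x)
  simp only [ContinuousLinearMap.coe_smul', Pi.smul_apply, ContinuousLinearMap.add_apply,
    ContinuousLinearMap.coe_comp', Function.comp_apply, ContinuousLinearMap.apply_apply,
    smul_eq_mul]
  field_simp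
  ring

lemma f3_eq (x Z X Y : Qn n) :
    fderiv ℝ (fderiv ℝ (fderiv ℝ (fun y => -2 * Real.log (F y)))) x Z X Y =
      -4 * ((F x)⁻¹ * (F x)⁻¹ * (F x)⁻¹)
          * (fderiv ℝ F x Z * fderiv ℝ F x X * fderiv ℝ F x Y)
      + 2 * ((F x)⁻¹ * (F x)⁻¹)
          * (fderiv ℝ (fderiv ℝ F) x Z X * fderiv ℝ F x Y
            + fderiv ℝ F x X * fderiv ℝ (fderiv ℝ F) x Z Y
            + fderiv ℝ F x Z * fderiv ℝ (fderiv ℝ F) x X Y)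
      - 2 * (F x)⁻¹ * fderiv ℝ (fderiv ℝ (fderiv ℝ F)) x Z X Y := by
  have hfC : ContDiff ℝ (⊤ : ℕ∞) (fun y => -2 * Real.log (F y)) :=
    contDiff_const.mul (hF.log fun y => ne_of_gt (hFpos y))
  have hdiff : DifferentiableAt ℝ (fderiv ℝ (fderiv ℝ (fun y => -2 * Real.log (F y)))) x := by
    have h1 : ContDiff ℝ ((⊤ : ℕ∞) : WithTop ℕ∞) (fderiv ℝ (fun y => -2 * Real.log (F y))) :=
      hfC.fderiv_right (by norm_cast)
    have h2 : ContDiff ℝ ((⊤ : ℕ∞) : WithTop ℕ∞)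
        (fderiv ℝ (fderiv ℝ (fun y => -2 * Real.log (F y)))) := h1.fderiv_right (by norm_cast)
    exact (h2.differentiable (by norm_cast)).differentiableAt
  rw [← fderiv_clm_eval2 hdiff Z X Y]
  have e : (fun y => fderiv ℝ (fderiv ℝ (fun z => -2 * Real.log (F z))) y X Y)
      = fun y => 2 * (((F y)⁻¹ * (F y)⁻¹) * (fderiv ℝ F y X * fderiv ℝ F y Y))
          - 2 * ((F y)⁻¹ * fderiv ℝ (fderiv ℝ F) y X Y) := by
    funext y; exact f2_eq hF hFpos y X Y
  rw [e]
  have hinv := hasFDerivAt_invF hF hFpos x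
  have hD := ((((hinv.mul hinv).mul ((hasFDerivAt_dF hF x X).mul
      (hasFDerivAt_dF hF x Y))).const_mul (2 : ℝ)).sub
      (((hinv.mul (hasFDerivAt_b2 hF x X Y)).const_mul (2 : ℝ))))
  erw [hD.fderiv]
  have hne : F x ≠ 0 := ne_of_gt (hFpos x)
  simp only [ContinuousLinearMap.coe_smul', Pi.smul_apply, ContinuousLinearMap.add_apply,
    ContinuousLinearMap.coe_sub', Pi.sub_apply, ContinuousLinearMap.coe_comp',
    Function.comp_apply, ContinuousLinearMap.apply_apply, smul_eq_mul, Pi.mul_apply]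
  field_simp
  ring

end core

/-- Homogeneity of the P-form in `Z`. -/
lemma PQ_smul {n : ℕ} {g : Qn n → ℝ} (hg : ContDiff ℝ (⊤ : ℕ∞) g) (x : Qn n) (c : ℝ)
    (Z : Qn n) : PQ n g x (c • Z) = c * PQ n g x Z := by
  simp only [PQ, D3Q_eq hg, Iop_smul, map_smul, ContinuousLinearMap.smul_apply, smul_eq_mul,
    Finset.mul_sum, Finset.sum_add_distrib, mul_add]

theorem qc_P_change_of_variable_F (n : ℕ) (hn : 1 ≤ n) (F : Qn n → ℝ)
    (hF : ContDiff ℝ (⊤ : ℕ∞) F) (hFpos : ∀ x, 0 < F x)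
    (u f : Qn n → ℝ) (hu : u = fun x => (F x) ^ 2)
    (hf : f = fun x => -2 * Real.log (F x)) (x : Qn n) :
    u x * PQ n f x (gradient f x) =
      4 * PQ n F x (gradient F x)
      + 8 * (F x) ^ (-2 : ℤ) * ‖gradient F x‖ ^ 4
      - 8 * (F x) ^ (-1 : ℤ) * D2Q n F x (gradient F x) (gradient F x)
      - 4 * (F x) ^ (-1 : ℤ) * ‖gradient F x‖ ^ 2 * lapQ n F x := by
  subst hu hf
  have hne : F x ≠ 0 := ne_of_gt (hFpos x)
  have hfC : ContDiff ℝ (⊤ : ℕ∞) (fun y => -2 * Real.log (F y)) :=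
    contDiff_const.mul (hF.log fun y => ne_of_gt (hFpos y))
  set G : Qn n := gradient F x with hGdef
  -- gradient facts
  have hgrad : ∀ v : Qn n, fderiv ℝ F x v = ⟪G, v⟫ := by
    intro v
    rw [hGdef, gradient]
    exact (InnerProductSpace.toDual_symm_apply).symm
  have hGb : ∀ b, G b = fderiv ℝ F x (eQ n b) := by
    intro b
    rw [hgrad (eQ n b), eQ, real_inner_comm]
    simp [EuclideanSpace.inner_single_left]
  have hnormG : fderiv ℝ F x G = ‖G‖ ^ 2 := by
    rw [hgrad G, real_inner_self_eq_norm_sq]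
  have hgradf : gradient (fun y => -2 * Real.log (F y)) x = (-2 * (F x)⁻¹) • G := by
    rw [hGdef, gradient, gradient, fderiv_f_eq hF hFpos x, map_smul]
  -- symmetry of the second derivative
  have hsymm2 : ∀ v w : Qn n, fderiv ℝ (fderiv ℝ F) x v w = fderiv ℝ (fderiv ℝ F) x w v := by
    have h := (hF.contDiffAt (x := x)).isSymmSndFDerivAt
      (by simp [minSmoothness_of_isRCLikeNormedField]; exact WithTop.coe_le_coe.2 le_top)
    exact fun v w => h v w
  -- basic sums
  have hsum1 : ∑ b, fderiv ℝ F x (eQ n b) * fderiv ℝ F x (eQ n b) = ‖G‖ ^ 2 := by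
    rw [← hnormG, clm_sum (fderiv ℝ F x) G]
    exact Finset.sum_congr rfl fun b _ => by rw [hGb b]
  have hsum2 : ∀ W : Qn n,
      ∑ b, fderiv ℝ (fderiv ℝ F) x W (eQ n b) * fderiv ℝ F x (eQ n b)
        = fderiv ℝ (fderiv ℝ F) x W G := by
    intro W
    rw [clm_sum (fderiv ℝ (fderiv ℝ F) x W) G]
    exact Finset.sum_congr rfl fun b _ => by rw [hGb b]; ring
  have hlap : ∑ b, fderiv ℝ (fderiv ℝ F) x (eQ n b) (eQ n b) = lapQ n F x := by
    rw [lapQ]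
    exact Finset.sum_congr rfl fun b _ => (D2Q_eq F x _ _).symm
  -- cancellation sums
  have hS3 : ∀ s, ∑ b, fderiv ℝ F x (eQ n b) * fderiv ℝ F x (Iop n s (eQ n b)) = 0 := by
    intro s
    exact sum_I_cancel s (fun v w => fderiv ℝ F x v * fderiv ℝ F x w)
      (fun v c w => by simp only [map_smul, smul_eq_mul]; ring)
      (fun a t t' => by ring)
  have hS4 : ∀ s, ∑ b, fderiv ℝ (fderiv ℝ F) x (eQ n b) (Iop n s (eQ n b)) = 0 := by
    intro s
    exact sum_I_cancel s (fun v w => fderiv ℝ (fderiv ℝ F) x v w)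
      (fun v c w => by simp only [map_smul, smul_eq_mul])
      (fun a t t' => hsymm2 _ _)
  have hS5 : ∀ (s) (W : Qn n),
      ∑ b, (fderiv ℝ (fderiv ℝ F) x W (eQ n b) * fderiv ℝ F x (Iop n s (eQ n b))
        + fderiv ℝ (fderiv ℝ F) x W (Iop n s (eQ n b)) * fderiv ℝ F x (eQ n b)) = 0 := by
    intro s W
    exact sum_I_cancel s
      (fun v w => fderiv ℝ (fderiv ℝ F) x W v * fderiv ℝ F x w
        + fderiv ℝ (fderiv ℝ F) x W w * fderiv ℝ F x v)
      (fun v c w => by simp only [map_smul, smul_eq_mul]; ring)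
      (fun a t t' => by ring)
  -- the master formula for PQ of f
  have key : ∀ Z : Qn n, PQ n (fun y => -2 * Real.log (F y)) x Z =
      -2 * (F x)⁻¹ * PQ n F x Z
      + 4 * ((F x)⁻¹ * (F x)⁻¹) * fderiv ℝ (fderiv ℝ F) x Z G
      + 2 * ((F x)⁻¹ * (F x)⁻¹) * fderiv ℝ F x Z * lapQ n F x
      - 4 * ((F x)⁻¹ * (F x)⁻¹ * (F x)⁻¹) * fderiv ℝ F x Z * (‖G‖ ^ 2) := by
    intro Z
    have hD3f : ∀ Z' X Y : Qn n, D3Q n (fun y => -2 * Real.log (F y)) x Z' X Y =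
        -4 * ((F x)⁻¹ * (F x)⁻¹ * (F x)⁻¹)
            * (fderiv ℝ F x Z' * fderiv ℝ F x X * fderiv ℝ F x Y)
        + 2 * ((F x)⁻¹ * (F x)⁻¹)
            * (fderiv ℝ (fderiv ℝ F) x Z' X * fderiv ℝ F x Y
              + fderiv ℝ F x X * fderiv ℝ (fderiv ℝ F) x Z' Y
              + fderiv ℝ F x Z' * fderiv ℝ (fderiv ℝ F) x X Y)
        - 2 * (F x)⁻¹ * fderiv ℝ (fderiv ℝ (fderiv ℝ F)) x Z' X Y := fun Z' X Y => by
      rw [D3Q_eq hfC, f3_eq hF hFpos]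
    have hD3F : ∀ Z' X Y : Qn n,
        fderiv ℝ (fderiv ℝ (fderiv ℝ F)) x Z' X Y = D3Q n F x Z' X Y := fun Z' X Y =>
      (D3Q_eq hF x Z' X Y).symm
    rw [PQ]
    -- untwisted part
    have hU : ∑ b, D3Q n (fun y => -2 * Real.log (F y)) x Z (eQ n b) (eQ n b)
        = (-4 * ((F x)⁻¹ * (F x)⁻¹ * (F x)⁻¹) * fderiv ℝ F x Z) * (‖G‖ ^ 2)
          + (4 * ((F x)⁻¹ * (F x)⁻¹)) * fderiv ℝ (fderiv ℝ F) x Z G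
          + (2 * ((F x)⁻¹ * (F x)⁻¹) * fderiv ℝ F x Z) * lapQ n F x
          - (2 * (F x)⁻¹) * ∑ b, D3Q n F x Z (eQ n b) (eQ n b) := by
      rw [← hsum1, ← hsum2 Z, ← hlap]
      rw [Finset.sum_congr rfl fun b _ => hD3f Z (eQ n b) (eQ n b)]
      simp only [Finset.mul_sum, ← Finset.sum_sub_distrib, ← Finset.sum_add_distrib]
      refine Finset.sum_congr rfl fun b _ => ?_
      rw [← hD3F]
      ring
    -- twisted parts
    have hT : ∀ s, ∑ b, D3Q n (fun y => -2 * Real.log (F y)) x (Iop n s Z)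
        (eQ n b) (Iop n s (eQ n b))
        = -(2 * (F x)⁻¹) * ∑ b, D3Q n F x (Iop n s Z) (eQ n b) (Iop n s (eQ n b)) := by
      intro s
      rw [Finset.sum_congr rfl fun b _ => hD3f (Iop n s Z) (eQ n b) (Iop n s (eQ n b))]
      have expand : ∀ b, -4 * ((F x)⁻¹ * (F x)⁻¹ * (F x)⁻¹)
            * (fderiv ℝ F x (Iop n s Z) * fderiv ℝ F x (eQ n b)
                * fderiv ℝ F x (Iop n s (eQ n b)))
          + 2 * ((F x)⁻¹ * (F x)⁻¹)
              * (fderiv ℝ (fderiv ℝ F) x (Iop n s Z) (eQ n b)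
                    * fderiv ℝ F x (Iop n s (eQ n b))
                + fderiv ℝ F x (eQ n b)
                    * fderiv ℝ (fderiv ℝ F) x (Iop n s Z) (Iop n s (eQ n b))
                + fderiv ℝ F x (Iop n s Z)
                    * fderiv ℝ (fderiv ℝ F) x (eQ n b) (Iop n s (eQ n b)))
          - 2 * (F x)⁻¹ * fderiv ℝ (fderiv ℝ (fderiv ℝ F)) x (Iop n s Z) (eQ n b)
                (Iop n s (eQ n b))
          = (-4 * ((F x)⁻¹ * (F x)⁻¹ * (F x)⁻¹) * fderiv ℝ F x (Iop n s Z))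
              * (fderiv ℝ F x (eQ n b) * fderiv ℝ F x (Iop n s (eQ n b)))
            + (2 * ((F x)⁻¹ * (F x)⁻¹))
              * (fderiv ℝ (fderiv ℝ F) x (Iop n s Z) (eQ n b)
                    * fderiv ℝ F x (Iop n s (eQ n b))
                + fderiv ℝ (fderiv ℝ F) x (Iop n s Z) (Iop n s (eQ n b))
                    * fderiv ℝ F x (eQ n b))
            + (2 * ((F x)⁻¹ * (F x)⁻¹) * fderiv ℝ F x (Iop n s Z))
              * fderiv ℝ (fderiv ℝ F) x (eQ n b) (Iop n s (eQ n b))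
            - (2 * (F x)⁻¹) * D3Q n F x (Iop n s Z) (eQ n b) (Iop n s (eQ n b)) := by
        intro b; rw [← hD3F]; ring
      rw [Finset.sum_congr rfl fun b _ => expand b]
      rw [Finset.sum_sub_distrib, Finset.sum_add_distrib, Finset.sum_add_distrib]
      rw [← Finset.mul_sum, ← Finset.mul_sum, ← Finset.mul_sum, ← Finset.mul_sum,
        hS3 s, hS5 s (Iop n s Z), hS4 s]
      ring
    rw [hU, Finset.sum_congr rfl fun s _ => hT s]
    rw [← Finset.mul_sum, PQ]
    ring
  -- final assembly
  rw [hgradf, key ((-2 * (F x)⁻¹) • G), PQ_smul hF]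
  simp only [map_smul, ContinuousLinearMap.smul_apply, smul_eq_mul]
  rw [hnormG, D2Q_eq F x G G]
  have hz1 : (F x : ℝ) ^ (-1 : ℤ) = (F x)⁻¹ := by simp
  have hz2 : (F x : ℝ) ^ (-2 : ℤ) = (F x)⁻¹ * (F x)⁻¹ := by
    rw [zpow_neg, ← mul_inv, zpow_two]
  rw [hz1, hz2]
  field_simp
  ring
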